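/- The assignment j*x ↦ x ⊕ Φ⁻¹x on objects, sending the morphism (f, f') : j*x → j*y to the matrix [[f, f'], [0, Φ⁻¹f]] : x ⊕ Φ⁻¹x → y ⊕ Φ⁻¹y, defines a functor j_* : 𝒟_Φ → 𝒟. -/

import Mathlib

open CategoryTheory CategoryTheory.Limits

universe v u

/-- The category `𝒟_Φ`: same objects as `𝒟`; we write `j*x` for the object
corresponding to `x : 𝒟`. -/
structure DPhi (D : Type u) [Category.{v} D] [Preadditive D] (Φinv : D ⥤ D) where
  /-- the underlying object of `𝒟` -/
  base : D

variable {D : Type u} [Category.{v} D] [Preadditive D] [HasBinaryBiproducts D]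
  (Φinv : D ⥤ D) [Φinv.Additive]

/-- `𝒟_Φ` as a category: `Hom(j*x, j*y) = Hom(x, y) × Hom(x, Φ⁻¹ y)`, with
composition `(f, f') ∘ (g, g') = (f ∘ g, f' ∘ g + Φ⁻¹(f) ∘ g')`. -/
instance DPhi.category : Category (DPhi D Φinv) where
  Hom x y := (x.base ⟶ y.base) × (x.base ⟶ Φinv.obj y.base)
  id x := (𝟙 x.base, 0)
  comp p q := (p.1 ≫ q.1, p.1 ≫ q.2 + p.2 ≫ Φinv.map q.1)
  id_comp p := by dsimp; simp
  comp_id p := by dsimp; simp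
  assoc p q r := by
    dsimp
    refine Prod.ext (by simp) ?_
    simp [Preadditive.add_comp, Preadditive.comp_add, add_assoc]

/-- The proposed object assignment of `j_* : 𝒟_Φ → 𝒟`, namely `j*x ↦ x ⊕ Φ⁻¹x`. -/
noncomputable def jLowerObj (x : DPhi D Φinv) : D := x.base ⊞ Φinv.obj x.base

/-- The proposed morphism assignment of `j_*`: the pair `(f, f') : j*x ⟶ j*y` is
sent to the upper-triangular matrix `[[f, f'], [0, Φ⁻¹f]] : x ⊕ Φ⁻¹x ⟶ y ⊕ Φ⁻¹y`. -/
noncomputable def jLowerMap {x y : DPhi D Φinv} (p : x ⟶ y) : jLowerObj Φinv x ⟶ jLowerObj Φinv y :=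
  biprod.desc (biprod.lift p.1 p.2) (biprod.lift 0 (Φinv.map p.1))

/-- the assignment `j*x ↦ x ⊕ Φ⁻¹x`,
`(f, f') ↦ [[f, f'], [0, Φ⁻¹f]]` defines a functor `j_* : 𝒟_Φ ⥤ 𝒟`; that is, it
preserves identities and composition. -/
theorem jLower_is_functor :
    (∀ x : DPhi D Φinv, jLowerMap Φinv (𝟙 x) = 𝟙 (jLowerObj Φinv x)) ∧
      ∀ {x y z : DPhi D Φinv} (p : x ⟶ y) (q : y ⟶ z),
        jLowerMap Φinv (p ≫ q) = jLowerMap Φinv p ≫ jLowerMap Φinv q := by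
  constructor
  · intro x
    show jLowerMap Φinv (⟨𝟙 x.base, 0⟩ : x ⟶ x) = _
    apply biprod.hom_ext <;> apply biprod.hom_ext' <;>
      simp [jLowerMap, jLowerObj, DPhi.category]
  · intro x y z p q
    show jLowerMap Φinv ⟨p.1 ≫ q.1, p.1 ≫ q.2 + p.2 ≫ Φinv.map q.1⟩ = _
    apply biprod.hom_ext <;> apply biprod.hom_ext' <;>
      simp [jLowerMap, jLowerObj]
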